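/- The single-partite real embedding preserves measurement statistics: for every complex density matrix ρ (Hermitian, positive semi-definite, trace one) and every Hermitian effect E, tr(ρE) = tr(M(ρ)·Γ(E)) where M(ρ) := (1/2)Γ(ρ); moreover M(ρ) is a real symmetric positive semi-definite matrix of trace one. -/

import Mathlib

open Kronecker Matrix
open scoped ComplexOrder

/-- 2×2 rotation matrix J = [[0,-1],[1,0]]. -/
def Jmat : Matrix (Fin 2) (Fin 2) ℝ := !![0, -1; 1, 0]

/-- Entrywise real part of a complex matrix. -/
def reM {d : ℕ} (A : Matrix (Fin d) (Fin d) ℂ) : Matrix (Fin d) (Fin d) ℝ :=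
  A.map Complex.re

/-- Entrywise imaginary part of a complex matrix. -/
def imM {d : ℕ} (A : Matrix (Fin d) (Fin d) ℂ) : Matrix (Fin d) (Fin d) ℝ :=
  A.map Complex.im

/-- The standard complex-to-real mapping Γ(A) = I ⊗ Re(A) + J ⊗ Im(A). -/
def Gamma {d : ℕ} (A : Matrix (Fin d) (Fin d) ℂ) :
    Matrix (Fin 2 × Fin d) (Fin 2 × Fin d) ℝ :=
  (1 : Matrix (Fin 2) (Fin 2) ℝ) ⊗ₖ reM A + Jmat ⊗ₖ imM A

lemma gamma_apply {d : ℕ} (A : Matrix (Fin d) (Fin d) ℂ) (i j : Fin 2) (k l : Fin d) :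
    Gamma A (i, k) (j, l) =
      (1 : Matrix (Fin 2) (Fin 2) ℝ) i j * (A k l).re + Jmat i j * (A k l).im := by
  simp [Gamma, reM, imM]

lemma sum_antisym {d : ℕ} (f : Fin d → Fin d → ℝ) (h : ∀ k l, f k l = - f l k) :
    ∑ k, ∑ l, f k l = 0 := by
  have h1 : (∑ k, ∑ l, f k l) = -∑ k, ∑ l, f k l :=
    calc ∑ k, ∑ l, f k l = ∑ k, ∑ l, -f l k :=
          Finset.sum_congr rfl fun k _ => Finset.sum_congr rfl fun l _ => h k l
      _ = -∑ k, ∑ l, f l k := by simp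
      _ = -∑ k, ∑ l, f k l := by rw [Finset.sum_comm]
  linarith

lemma trace_key {d : ℕ} (A B : Matrix (Fin d) (Fin d) ℂ) :
    (Gamma A * Gamma B).trace =
      ∑ k, ∑ l, 2 * ((A k l).re * (B l k).re - (A k l).im * (B l k).im) := by
  simp only [Matrix.trace, Matrix.diag, Matrix.mul_apply, Fintype.sum_prod_type,
    Fin.sum_univ_two, gamma_apply, Matrix.one_apply, Jmat, Matrix.cons_val', Matrix.cons_val_zero,
    Matrix.cons_val_one, Matrix.head_cons, Matrix.head_fin_const, Matrix.empty_val',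
    Matrix.cons_val_fin_one, if_true, if_false]
  norm_num
  rw [← Finset.sum_add_distrib]
  refine Finset.sum_congr rfl fun k _ => ?_
  simp only [mul_sub, two_mul, Finset.sum_add_distrib, Finset.sum_sub_distrib]
  ring

theorem single_partite_embedding {d : ℕ} (ρ E : Matrix (Fin d) (Fin d) ℂ)
    (hρ : ρ.PosSemidef) (hρtr : ρ.trace = 1) (hE : E.IsHermitian) :
    (ρ * E).trace = ((((1 / 2 : ℝ) • Gamma ρ) * Gamma E).trace : ℂ) ∧
      ((1 / 2 : ℝ) • Gamma ρ).IsSymm ∧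
      ((1 / 2 : ℝ) • Gamma ρ).PosSemidef ∧
      ((1 / 2 : ℝ) • Gamma ρ).trace = 1 := by
  have hρre : ∀ k l, (ρ l k).re = (ρ k l).re := fun k l => by
    rw [← hρ.1.apply k l]; simp
  have hρim : ∀ k l, (ρ l k).im = -(ρ k l).im := fun k l => by
    rw [← hρ.1.apply k l]; simp
  have hEre : ∀ k l, (E l k).re = (E k l).re := fun k l => by
    rw [← hE.apply k l]; simp
  have hEim : ∀ k l, (E l k).im = -(E k l).im := fun k l => by
    rw [← hE.apply k l]; simp
  have hGsym : (Gamma ρ).IsSymm := by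
    rw [Matrix.IsSymm]
    ext ⟨i, k⟩ ⟨j, l⟩
    rw [Matrix.transpose_apply, gamma_apply, gamma_apply]
    fin_cases i <;> fin_cases j <;>
      simp [Jmat, Matrix.one_apply, hρre k l, hρim k l]
  refine ⟨?_, ?_, ?_, ?_⟩
  · -- trace preservation
    have hR : (((1 / 2 : ℝ) • Gamma ρ) * Gamma E).trace =
        ∑ k, ∑ l, ((ρ k l).re * (E l k).re - (ρ k l).im * (E l k).im) := by
      rw [smul_mul_assoc, Matrix.trace_smul, trace_key, smul_eq_mul, Finset.mul_sum]
      refine Finset.sum_congr rfl fun k _ => ?_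
      rw [Finset.mul_sum]
      exact Finset.sum_congr rfl fun l _ => by ring
    rw [hR]
    have hL : (ρ * E).trace = ∑ k, ∑ l, ρ k l * E l k := by
      simp [Matrix.trace, Matrix.diag, Matrix.mul_apply]
    rw [hL]
    apply Complex.ext
    · push_cast
      simp only [Complex.re_sum, Complex.mul_re]
      refine Finset.sum_congr rfl fun k _ => Finset.sum_congr rfl fun l _ => ?_
      simp
    · push_cast
      simp only [Complex.im_sum, Complex.mul_im]
      refine (sum_antisym _ fun k l => by
        rw [hρre k l, hρim k l, hEim l k, hEre l k]; ring).trans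
        (Finset.sum_eq_zero fun k _ => Finset.sum_eq_zero fun l _ => by simp).symm
  · rw [Matrix.IsSymm, Matrix.transpose_smul, hGsym]
  · refine Matrix.PosSemidef.of_dotProduct_mulVec_nonneg ?_ ?_
    · rw [Matrix.IsHermitian, Matrix.conjTranspose_eq_transpose_of_trivial,
        Matrix.transpose_smul, hGsym]
    · intro x
      set z : Fin d → ℂ := fun k => ⟨x (0, k), x (1, k)⟩ with hz
      have hpos := hρ.dotProduct_mulVec_nonneg z
      rw [Complex.le_def] at hpos
      have key : star x ⬝ᵥ ((1 / 2 : ℝ) • Gamma ρ) *ᵥ x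
          = (1 / 2) * (star z ⬝ᵥ ρ *ᵥ z).re := by
        simp only [star_trivial, dotProduct, Matrix.mulVec, Matrix.smul_apply,
          smul_eq_mul, Fintype.sum_prod_type, Fin.sum_univ_two, gamma_apply,
          Matrix.one_apply, Jmat, Pi.star_apply, Complex.re_sum, Complex.mul_re,
          Complex.im_sum, Complex.mul_im]
        norm_num [Complex.star_def, Complex.conj_re, Complex.conj_im, hz]
        simp only [mul_add, mul_sub, add_mul, sub_mul, mul_neg, neg_mul, Finset.mul_sum,
          ← Finset.sum_neg_distrib, ← Finset.sum_add_distrib, ← Finset.sum_sub_distrib]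
        refine Finset.sum_congr rfl fun k _ => Finset.sum_congr rfl fun l _ => ?_
        ring
      rw [key]
      have h0 : (0:ℂ).re = 0 := rfl
      nlinarith [hpos.1]
  · have hG : (Gamma ρ).trace = 2 * ∑ k, (ρ k k).re := by
      simp only [Matrix.trace, Matrix.diag, Fintype.sum_prod_type, Fin.sum_univ_two,
        gamma_apply, Matrix.one_apply, Jmat]
      norm_num
      ring
    have h1 : ∑ k, (ρ k k).re = 1 := by
      have := congrArg Complex.re hρtr
      simpa [Matrix.trace, Matrix.diag, Complex.re_sum] using this
    rw [Matrix.trace_smul, hG, smul_eq_mul, h1]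
    norm_num
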